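/- Let (X,Σ) be a measurable space, let 𝒮 and 𝒯 be probability measures on X, let C > 0, and let C₁,…,C_N be a finite measurable partition of X with 𝒮(Cᵢ) ≥ C·𝒯(Cᵢ) for every i; write cell(x) for the partition cell containing x. Then for every positive integer m, the expectation over a sample S = (s₁,…,s_m) drawn from 𝒮^m of the product measure of pairs with at least one empty cell satisfies E_{S∼𝒮^m}[ (𝒯×𝒯){(x₁,x₂) : cell(x₁) ∩ {s₁,…,s_m} = ∅ or cell(x₂) ∩ {s₁,…,s_m} = ∅} ] ≤ 2N/(C·m·e), where e is Euler's number. -/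

import Mathlib

open MeasureTheory ENNReal

lemma aux_real_tbound (m : ℕ) (hm : 0 < m) (t : ℝ) (ht0 : 0 ≤ t) (ht1 : t ≤ 1) :
    t * (1 - t) ^ m ≤ 1 / (m * Real.exp 1) := by
  have hm' : (0:ℝ) < m := Nat.cast_pos.mpr hm
  have h1 : (1 - t : ℝ) ≤ Real.exp (-t) := by
    have := Real.add_one_le_exp (-t); linarith
  have h2 : (1 - t) ^ m ≤ Real.exp (-t) ^ m :=
    pow_le_pow_left₀ (by linarith) h1 m
  have h3 : Real.exp (-t) ^ m = Real.exp (-((m:ℝ) * t)) := by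
    rw [← Real.exp_nat_mul]; ring_nf
  have hu : ((m:ℝ) * t) * Real.exp (-((m:ℝ) * t)) ≤ Real.exp (-1) := by
    have h4 : ((m:ℝ) * t) ≤ Real.exp ((m:ℝ) * t - 1) := by
      have := Real.add_one_le_exp ((m:ℝ) * t - 1); linarith
    calc ((m:ℝ) * t) * Real.exp (-((m:ℝ) * t))
        ≤ Real.exp ((m:ℝ) * t - 1) * Real.exp (-((m:ℝ) * t)) :=
          mul_le_mul_of_nonneg_right h4 (Real.exp_nonneg _)
      _ = Real.exp (-1) := by rw [← Real.exp_add]; ring_nf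
  have step : t * (1 - t) ^ m ≤ t * Real.exp (-((m:ℝ) * t)) := by
    rw [← h3]; exact mul_le_mul_of_nonneg_left h2 ht0
  have h5 : t * Real.exp (-((m:ℝ) * t)) ≤ Real.exp (-1) / m := by
    rw [div_eq_inv_mul, ← mul_le_mul_iff_right₀ hm']
    calc (m:ℝ) * (t * Real.exp (-((m:ℝ) * t))) = ((m:ℝ) * t) * Real.exp (-((m:ℝ) * t)) := by ring
      _ ≤ Real.exp (-1) := hu
      _ = (m:ℝ) * ((m:ℝ)⁻¹ * Real.exp (-1)) := by
          field_simp
  have h6 : Real.exp (-1) / (m:ℝ) = 1 / ((m:ℝ) * Real.exp 1) := by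
    rw [Real.exp_neg]; field_simp
  linarith [h6 ▸ h5]

/-- Under the weight-ratio condition `𝒮(Cᵢ) ≥ C·𝒯(Cᵢ)` on a finite measurable
partition of `X`, the expectation over a sample `S ∼ 𝒮^m` of the `𝒯×𝒯`-measure of pairs with
at least one sample-empty cell is at most `2N/(C·m·e)`. -/
theorem expected_pair_empty_cell_bound {X : Type*} [MeasurableSpace X]
    (𝒮 𝒯 : Measure X) [IsProbabilityMeasure 𝒮] [IsProbabilityMeasure 𝒯]
    (C : ℝ) (hC : 0 < C) (N : ℕ) (cells : Fin N → Set X)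
    (hmeas : ∀ i, MeasurableSet (cells i))
    (hdisj : Pairwise (Function.onFun Disjoint cells))
    (hcover : (⋃ i, cells i) = Set.univ)
    (hWR : ∀ i, ENNReal.ofReal C * 𝒯 (cells i) ≤ 𝒮 (cells i))
    (m : ℕ) (hm : 0 < m) :
    (∫⁻ S : Fin m → X,
        (𝒯.prod 𝒯) {p : X × X |
          (∃ i, p.1 ∈ cells i ∧ ∀ j, S j ∉ cells i) ∨ (∃ i, p.2 ∈ cells i ∧ ∀ j, S j ∉ cells i)}
        ∂(Measure.pi fun _ : Fin m => 𝒮))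
      ≤ ENNReal.ofReal (2 * N / (C * m * Real.exp 1)) := by
  classical
  set μ : Measure (Fin m → X) := Measure.pi fun _ : Fin m => 𝒮 with hμ
  set f : (Fin m → X) → ℝ≥0∞ :=
    fun S => 𝒯 {x : X | ∃ i, x ∈ cells i ∧ ∀ j, S j ∉ cells i} with hf
  -- Step A: pointwise bound by 2 * f S
  have stepA : ∀ S : Fin m → X,
      (𝒯.prod 𝒯) {p : X × X |
          (∃ i, p.1 ∈ cells i ∧ ∀ j, S j ∉ cells i) ∨ (∃ i, p.2 ∈ cells i ∧ ∀ j, S j ∉ cells i)}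
        ≤ 2 * f S := by
    intro S
    set A : Set X := {x : X | ∃ i, x ∈ cells i ∧ ∀ j, S j ∉ cells i} with hA
    have hsub : {p : X × X |
          (∃ i, p.1 ∈ cells i ∧ ∀ j, S j ∉ cells i) ∨ (∃ i, p.2 ∈ cells i ∧ ∀ j, S j ∉ cells i)}
        ⊆ (A ×ˢ Set.univ) ∪ (Set.univ ×ˢ A) := by
      rintro p (hp | hp)
      · exact Or.inl ⟨hp, trivial⟩
      · exact Or.inr ⟨trivial, hp⟩
    calc (𝒯.prod 𝒯) _ ≤ (𝒯.prod 𝒯) ((A ×ˢ Set.univ) ∪ (Set.univ ×ˢ A)) :=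
          measure_mono hsub
      _ ≤ (𝒯.prod 𝒯) (A ×ˢ Set.univ) + (𝒯.prod 𝒯) (Set.univ ×ˢ A) := measure_union_le _ _
      _ = 𝒯 A * 𝒯 Set.univ + 𝒯 Set.univ * 𝒯 A := by
          rw [Measure.prod_prod, Measure.prod_prod]
      _ = 2 * f S := by
          rw [measure_univ, mul_one, one_mul, two_mul]
  -- Step C: f S as a finite sum
  have stepC : ∀ S : Fin m → X,
      f S = ∑ i : Fin N, (if ∀ j, S j ∉ cells i then 𝒯 (cells i) else 0) := by
    intro S
    have hEq : {x : X | ∃ i, x ∈ cells i ∧ ∀ j, S j ∉ cells i}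
        = ⋃ i : Fin N, (if ∀ j, S j ∉ cells i then cells i else ∅) := by
      ext x
      simp only [Set.mem_setOf_eq, Set.mem_iUnion]
      constructor
      · rintro ⟨i, hx, hmiss⟩; exact ⟨i, by simp [hmiss, hx]⟩
      · rintro ⟨i, hx⟩
        by_cases h : ∀ j, S j ∉ cells i
        · simp [h] at hx; exact ⟨i, hx, h⟩
        · simp [h] at hx
    have hsubcell : ∀ k, (if ∀ j, S j ∉ cells k then cells k else ∅) ⊆ cells k := by
      intro k; split_ifs <;> simp
    rw [hf]
    simp only
    rw [hEq, measure_iUnion (fun i j hij => (hdisj hij).mono (hsubcell i) (hsubcell j))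
      (fun i => by by_cases h : ∀ j, S j ∉ cells i <;> simp [h, hmeas i]), tsum_fintype]
    exact Finset.sum_congr rfl fun i _ => by
      by_cases h : ∀ j, S j ∉ cells i <;> simp [h]
  -- missing-set measurability and measure
  have hmissMeas : ∀ i : Fin N, MeasurableSet {S : Fin m → X | ∀ j, S j ∉ cells i} := by
    intro i
    have : {S : Fin m → X | ∀ j, S j ∉ cells i} = ⋂ j, (fun S : Fin m → X => S j) ⁻¹' (cells i)ᶜ := by
      ext S; simp
    rw [this]
    exact MeasurableSet.iInter fun j => (measurable_pi_apply j) (hmeas i).compl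
  have hmissMeasure : ∀ i : Fin N,
      μ {S : Fin m → X | ∀ j, S j ∉ cells i} = (𝒮 (cells i)ᶜ) ^ m := by
    intro i
    have : {S : Fin m → X | ∀ j, S j ∉ cells i} = Set.pi Set.univ (fun _ : Fin m => (cells i)ᶜ) := by
      ext S; simp [Set.mem_pi]
    rw [this, hμ, Measure.pi_pi]
    simp
  -- Step D: per-cell bound
  have stepD : ∀ i : Fin N,
      𝒯 (cells i) * (𝒮 (cells i)ᶜ) ^ m ≤ ENNReal.ofReal (1 / (C * m * Real.exp 1)) := by
    intro i
    have hfin : 𝒮 (cells i) ≠ ⊤ := measure_ne_top _ _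
    set t : ℝ := (𝒮 (cells i)).toReal with ht
    have ht0 : 0 ≤ t := ENNReal.toReal_nonneg
    have ht1 : t ≤ 1 := by
      rw [ht]
      exact ENNReal.toReal_le_of_le_ofReal zero_le_one (by simpa using prob_le_one (μ := 𝒮) (s := cells i))
    have hSt : 𝒮 (cells i) = ENNReal.ofReal t := (ENNReal.ofReal_toReal hfin).symm
    have hcompl : 𝒮 (cells i)ᶜ = ENNReal.ofReal (1 - t) := by
      rw [measure_compl (hmeas i) hfin, measure_univ, hSt, ← ENNReal.ofReal_one,
        ← ENNReal.ofReal_sub _ ht0]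
    have hT : 𝒯 (cells i) ≤ ENNReal.ofReal (t / C) := by
      have hCne : ENNReal.ofReal C ≠ 0 := by
        simp [ENNReal.ofReal_eq_zero]; linarith
      have := hWR i
      rw [ENNReal.ofReal_div_of_pos hC, ← hSt]
      rw [ENNReal.le_div_iff_mul_le (Or.inl hCne) (Or.inl ENNReal.ofReal_ne_top), mul_comm]
      exact this
    calc 𝒯 (cells i) * (𝒮 (cells i)ᶜ) ^ m
        ≤ ENNReal.ofReal (t / C) * (ENNReal.ofReal (1 - t)) ^ m := by
          rw [hcompl]; exact mul_le_mul_left hT _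
      _ = ENNReal.ofReal (t / C * (1 - t) ^ m) := by
          rw [← ENNReal.ofReal_pow (by linarith), ← ENNReal.ofReal_mul (by positivity)]
      _ ≤ ENNReal.ofReal (1 / (C * m * Real.exp 1)) := by
          apply ENNReal.ofReal_le_ofReal
          have key := aux_real_tbound m hm t ht0 ht1
          have hm' : (0:ℝ) < m := Nat.cast_pos.mpr hm
          have hCpos : (0:ℝ) < C := hC
          rw [div_mul_eq_mul_div, div_le_iff₀ hCpos]
          calc t * (1 - t) ^ m ≤ 1 / ((m:ℝ) * Real.exp 1) := key
            _ = 1 / (C * m * Real.exp 1) * C := by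
                field_simp
  -- put it together
  calc (∫⁻ S, (𝒯.prod 𝒯) {p : X × X |
          (∃ i, p.1 ∈ cells i ∧ ∀ j, S j ∉ cells i) ∨ (∃ i, p.2 ∈ cells i ∧ ∀ j, S j ∉ cells i)} ∂μ)
      ≤ ∫⁻ S, 2 * f S ∂μ := lintegral_mono stepA
    _ = 2 * ∫⁻ S, f S ∂μ := lintegral_const_mul' 2 f ENNReal.ofNat_ne_top
    _ = 2 * ∑ i : Fin N, 𝒯 (cells i) * (𝒮 (cells i)ᶜ) ^ m := by
        congr 1
        have : (∫⁻ S, f S ∂μ)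
            = ∫⁻ S, ∑ i : Fin N, Set.indicator {S' : Fin m → X | ∀ j, S' j ∉ cells i}
                (fun _ => 𝒯 (cells i)) S ∂μ := by
          apply lintegral_congr
          intro S
          rw [stepC S]
          congr 1; ext i
          by_cases h : ∀ j, S j ∉ cells i <;> simp [Set.indicator, h]
        rw [this, lintegral_finset_sum]
        · apply Finset.sum_congr rfl
          intro i _
          rw [lintegral_indicator_const (hmissMeas i), hmissMeasure i]
        · intro i _
          exact (measurable_const.indicator (hmissMeas i))
    _ ≤ 2 * ∑ i : Fin N, ENNReal.ofReal (1 / (C * m * Real.exp 1)) := by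
        exact mul_le_mul_right (Finset.sum_le_sum fun i _ => stepD i) 2
    _ = ENNReal.ofReal (2 * N / (C * m * Real.exp 1)) := by
        rw [Finset.sum_const, Finset.card_univ, Fintype.card_fin, nsmul_eq_mul]
        rw [show (2 * (N:ℝ) / (C * m * Real.exp 1)) = (2 * N : ℕ) * (1 / (C * m * Real.exp 1)) by
          push_cast; ring]
        rw [ENNReal.ofReal_mul (by positivity), ENNReal.ofReal_natCast]
        push_cast
        ring
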